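/- Let H₁ →^T H₂ →^S H₃ be a complex (S∘T = 0) of closed densely defined operators between Hilbert spaces, and L ⊆ H₂ a closed subspace containing Im(T). Fix f ∈ L ∩ Ker(S) and a constant C > 0. Then the following are equivalent: (1) there exists u ∈ Dom(T) with T u = f and ‖u‖ ≤ C; (2) |⟨f, g⟩|² ≤ C² (‖T* g‖² + ‖S g‖²) for all g ∈ L ∩ Dom(T*) ∩ Dom(S). -/

import Mathlib

open scoped RealInnerProductSpace

/-- Hörmander's lemma (Theorem 1.1.4 in [H1]): for a complex `H₁ →ᵀ H₂ →ˢ H₃` of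
closed densely defined operators between Hilbert spaces, a closed subspace
`L ⊆ H₂` containing `Im T`, `f ∈ L ∩ Ker S` and `C > 0`, the existence of
`u ∈ Dom T` with `T u = f` and `‖u‖ ≤ C` is equivalent to the estimate
`|⟨f,g⟩|² ≤ C²(‖T* g‖² + ‖S g‖²)` for all `g ∈ L ∩ Dom T* ∩ Dom S`. -/
theorem stmt17 {H1 H2 H3 : Type*}
    [NormedAddCommGroup H1] [InnerProductSpace ℝ H1] [CompleteSpace H1]
    [NormedAddCommGroup H2] [InnerProductSpace ℝ H2] [CompleteSpace H2]
    [NormedAddCommGroup H3] [InnerProductSpace ℝ H3] [CompleteSpace H3]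
    (T : H1 →ₗ.[ℝ] H2) (S : H2 →ₗ.[ℝ] H3)
    (hTdense : Dense (T.domain : Set H1)) (hTclosed : IsClosed (T.graph : Set (H1 × H2)))
    (hSdense : Dense (S.domain : Set H2)) (hSclosed : IsClosed (S.graph : Set (H2 × H3)))
    (hST : ∀ x : T.domain, ∃ h : (T x : H2) ∈ S.domain, S ⟨T x, h⟩ = 0)
    (L : Submodule ℝ H2) (hL : IsClosed (L : Set H2))
    (hTL : ∀ x : T.domain, (T x : H2) ∈ L)
    (f : H2) (hfL : f ∈ L) (hfS : ∃ h : f ∈ S.domain, S ⟨f, h⟩ = 0)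
    (C : ℝ) (hC : 0 < C) :
    (∃ u : T.domain, T u = f ∧ ‖(u : H1)‖ ≤ C) ↔
    (∀ g : H2, g ∈ L → ∀ (hg1 : g ∈ T.adjoint.domain) (hg2 : g ∈ S.domain),
      ⟪f, g⟫ ^ 2 ≤ C ^ 2 * (‖T.adjoint ⟨g, hg1⟩‖ ^ 2 + ‖S ⟨g, hg2⟩‖ ^ 2)) := by
  constructor
  · rintro ⟨u, hu, hnu⟩ g hgL hg1 hg2
    have h1 : ⟪f, g⟫ = ⟪(u : H1), T.adjoint ⟨g, hg1⟩⟫ := by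
      have h2 := (T.adjoint_isFormalAdjoint hTdense) ⟨g, hg1⟩ u
      rw [← hu, real_inner_comm, ← h2, real_inner_comm]
    have h3 := abs_real_inner_le_norm (u : H1) (T.adjoint ⟨g, hg1⟩)
    have h4 : (0:ℝ) ≤ ‖T.adjoint ⟨g, hg1⟩‖ := norm_nonneg _
    have h6 : |⟪(u : H1), T.adjoint ⟨g, hg1⟩⟫| ≤ C * ‖T.adjoint ⟨g, hg1⟩‖ :=
      h3.trans (mul_le_mul_of_nonneg_right hnu h4)
    have h7 := pow_le_pow_left₀ (abs_nonneg _) h6 2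
    have h8 : (0:ℝ) ≤ ‖S ⟨g, hg2⟩‖ ^ 2 := sq_nonneg _
    rw [h1]
    calc ⟪(u : H1), T.adjoint ⟨g, hg1⟩⟫ ^ 2
        = |⟪(u : H1), T.adjoint ⟨g, hg1⟩⟫| ^ 2 := (sq_abs _).symm
      _ ≤ (C * ‖T.adjoint ⟨g, hg1⟩‖) ^ 2 := h7
      _ = C ^ 2 * ‖T.adjoint ⟨g, hg1⟩‖ ^ 2 := by ring
      _ ≤ C ^ 2 * (‖T.adjoint ⟨g, hg1⟩‖ ^ 2 + ‖S ⟨g, hg2⟩‖ ^ 2) := by nlinarith [sq_nonneg C]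
  · intro hest
    have key : ∀ g : T.adjoint.domain, ⟪f, (g : H2)⟫ ^ 2 ≤ C ^ 2 * ‖T.adjoint g‖ ^ 2 := by
        classical
        -- the kernel of S as a submodule
        set K : Submodule ℝ H2 := S.graph.comap (LinearMap.prod LinearMap.id 0) with hK
        have hmemK : ∀ g : H2, g ∈ K ↔ ∃ h : g ∈ S.domain, S ⟨g, h⟩ = 0 := by
          intro g
          constructor
          · intro hg
            rcases S.mem_graph_iff.mp hg with ⟨y, hy1, hy2⟩
            have hy1' : (y : H2) = g := hy1
            have hy2' : S y = 0 := hy2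
            refine ⟨hy1' ▸ y.2, ?_⟩
            have hyy : (⟨g, hy1' ▸ y.2⟩ : S.domain) = y := Subtype.ext hy1'.symm
            rw [hyy]; exact hy2'
          · rintro ⟨h, hh⟩
            exact S.mem_graph_iff.mpr ⟨⟨g, h⟩, rfl, hh⟩
        have hKclosed : IsClosed (K : Set H2) := by
          have : (K : Set H2) = (fun x : H2 => (x, (0:H3))) ⁻¹' (S.graph : Set (H2 × H3)) := rfl
          rw [this]
          exact hSclosed.preimage (by fun_prop)
        set N : Submodule ℝ H2 := L ⊓ K with hN
        have hNclosed : IsClosed (N : Set H2) := by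
          have : (N : Set H2) = (L : Set H2) ∩ (K : Set H2) := rfl
          rw [this]; exact hL.inter hKclosed
        haveI : CompleteSpace N := hNclosed.completeSpace_coe
        have hfN : f ∈ N := ⟨hfL, (hmemK f).mpr hfS⟩
        have hTN : ∀ x : T.domain, (T x : H2) ∈ N := fun x => ⟨hTL x, (hmemK _).mpr (hST x)⟩
        intro g
        set g1 : H2 := (N.orthogonalProjectionOnto (g : H2) : H2) with hg1def
        set g2 : H2 := (g : H2) - g1 with hg2def
        have hg1N : g1 ∈ N := (N.orthogonalProjectionOnto (g : H2)).2
        have hg2orth : g2 ∈ Nᗮ := N.sub_starProjection_mem_orthogonal (g : H2)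
        have hg2adj : ∀ x : T.domain, ⟪(0 : H1), (x : H1)⟫ = ⟪g2, T x⟫ := by
          intro x
          rw [inner_zero_left, real_inner_comm]
          exact ((Submodule.mem_orthogonal N g2).mp hg2orth _ (hTN x)).symm
        have hg2dom : g2 ∈ T.adjoint.domain :=
          LinearPMap.mem_adjoint_domain_of_exists _ ⟨0, hg2adj⟩
        have hg2val : T.adjoint ⟨g2, hg2dom⟩ = 0 :=
          LinearPMap.adjoint_apply_eq hTdense _ hg2adj
        have hg1dom : g1 ∈ T.adjoint.domain := by
          have : g1 = (g : H2) - g2 := by rw [hg2def]; abel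
          rw [this]; exact sub_mem g.2 hg2dom
        have hg1val : T.adjoint ⟨g1, hg1dom⟩ = T.adjoint g := by
          have heq : (⟨g1, hg1dom⟩ : T.adjoint.domain) = g - ⟨g2, hg2dom⟩ := by
            apply Subtype.ext
            simp [hg2def]
          rw [heq, T.adjoint.map_sub, hg2val, sub_zero]
        have hfg : ⟪f, (g : H2)⟫ = ⟪f, g1⟫ := by
          have h0 : ⟪f, g2⟫ = 0 := (Submodule.mem_orthogonal N g2).mp hg2orth f hfN
          have : (g : H2) = g1 + g2 := by rw [hg2def]; abel
          rw [this, inner_add_right, h0, add_zero]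
        rcases hg1N with ⟨hg1L, hg1K⟩
        rcases (hmemK g1).mp hg1K with ⟨hg1S, hg1Sval⟩
        have := hest g1 hg1L hg1dom hg1S
        rw [hg1val, hg1Sval] at this
        rw [hfg]
        simpa using this
    classical
    -- |⟪f,g⟫| ≤ C ‖T† g‖
    have key' : ∀ g : T.adjoint.domain, |⟪f, (g : H2)⟫| ≤ C * ‖T.adjoint g‖ := by
      intro g
      have h := key g
      have h1 : (0:ℝ) ≤ C * ‖T.adjoint g‖ := by positivity
      nlinarith [sq_abs (⟪f, (g : H2)⟫), abs_nonneg (⟪f, (g : H2)⟫)]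
    -- well-definedness
    have wd : ∀ a b : T.adjoint.domain, T.adjoint a = T.adjoint b →
        ⟪f, (a : H2)⟫ = ⟪f, (b : H2)⟫ := by
      intro a b hab
      have h := key' (a - b)
      have h2 : T.adjoint (a - b) = 0 := by rw [T.adjoint.map_sub, hab, sub_self]
      rw [h2, norm_zero, mul_zero] at h
      have h3 : ⟪f, ((a - b : T.adjoint.domain) : H2)⟫ = 0 := by
        have := abs_nonneg (⟪f, ((a - b : T.adjoint.domain) : H2)⟫)
        have habs : |⟪f, ((a - b : T.adjoint.domain) : H2)⟫| = 0 := le_antisymm h this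
        exact abs_eq_zero.mp habs
      have h4 : ((a - b : T.adjoint.domain) : H2) = (a : H2) - (b : H2) := rfl
      rw [h4, inner_sub_right, sub_eq_zero] at h3
      exact h3
    -- the functional on the range of T†
    set p : Submodule ℝ H1 := LinearMap.range T.adjoint.toFun with hp
    have hmem : ∀ x : p, ∃ y : T.adjoint.domain, T.adjoint y = (x : H1) := fun x => x.2
    set φ₀ : p →ₗ[ℝ] ℝ :=
      { toFun := fun x => ⟪f, (((hmem x).choose : T.adjoint.domain) : H2)⟫
        map_add' := by
          intro a b
          have ha := (hmem a).choose_spec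
          have hb := (hmem b).choose_spec
          have hab := (hmem (a + b)).choose_spec
          have : T.adjoint ((hmem (a+b)).choose) =
              T.adjoint ((hmem a).choose + (hmem b).choose) := by
            rw [T.adjoint.map_add, ha, hb, hab]; rfl
          have h5 := wd _ _ this
          simpa [inner_add_right] using h5
        map_smul' := by
          intro c a
          have ha := (hmem a).choose_spec
          have hca := (hmem (c • a)).choose_spec
          have : T.adjoint ((hmem (c • a)).choose) =
              T.adjoint (c • (hmem a).choose) := by
            rw [T.adjoint.map_smul, ha, hca]; rfl
          have h5 := wd _ _ this
          simpa [inner_smul_right] using h5 } with hφ₀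
    have hbound : ∀ x : p, ‖φ₀ x‖ ≤ C * ‖x‖ := by
      intro x
      have hx := (hmem x).choose_spec
      have h := key' ((hmem x).choose)
      rw [hx] at h
      simpa [hφ₀, Real.norm_eq_abs] using h
    set φ : p →L[ℝ] ℝ := φ₀.mkContinuous C hbound with hφ
    obtain ⟨w, hw, hwnorm⟩ := exists_extension_norm_eq p φ
    set u : H1 := (InnerProductSpace.toDual ℝ H1).symm w with hudef
    have hunorm : ‖u‖ ≤ C := by
      rw [hudef]
      rw [LinearIsometryEquiv.norm_map]
      rw [hwnorm]
      exact φ₀.mkContinuous_norm_le hC.le hbound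
    have hukey : ∀ g : T.adjoint.domain, ⟪u, T.adjoint g⟫ = ⟪f, (g : H2)⟫ := by
      intro g
      have hmemg : (T.adjoint g : H1) ∈ p := ⟨g, rfl⟩
      have h1 : ⟪u, T.adjoint g⟫ = w (T.adjoint g) := InnerProductSpace.toDual_symm_apply
      have h2 : w (T.adjoint g) = φ ⟨T.adjoint g, hmemg⟩ := hw ⟨T.adjoint g, hmemg⟩
      have h3 : φ ⟨T.adjoint g, hmemg⟩ =
          ⟪f, (((hmem ⟨T.adjoint g, hmemg⟩).choose : T.adjoint.domain) : H2)⟫ := rfl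
      have h4 : T.adjoint ((hmem ⟨T.adjoint g, hmemg⟩).choose) = T.adjoint g :=
        (hmem ⟨T.adjoint g, hmemg⟩).choose_spec
      rw [h1, h2, h3, wd _ _ h4]
    -- the graph argument
    set e : WithLp 2 (H1 × H2) ≃L[ℝ] H1 × H2 := WithLp.prodContinuousLinearEquiv 2 ℝ H1 H2 with he
    set G : Submodule ℝ (WithLp 2 (H1 × H2)) :=
      T.graph.comap (e.toLinearEquiv : WithLp 2 (H1 × H2) →ₗ[ℝ] H1 × H2) with hG
    have hGclosed : IsClosed (G : Set (WithLp 2 (H1 × H2))) := by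
      have : (G : Set (WithLp 2 (H1 × H2))) = e ⁻¹' (T.graph : Set (H1 × H2)) := rfl
      rw [this]
      exact hTclosed.preimage e.continuous
    haveI : CompleteSpace G := hGclosed.completeSpace_coe
    have hz : e.symm (u, f) ∈ G := by
      rw [← Submodule.orthogonal_orthogonal G]
      rw [Submodule.mem_orthogonal]
      intro v hv
      have h0 : ∀ x : T.domain, ⟪(x : H1), v.fst⟫ + ⟪(T x : H2), v.snd⟫ = 0 := by
        intro x
        have hxG : (e.symm ((x : H1), T x)) ∈ G := by
          have : (e.toLinearEquiv : WithLp 2 (H1 × H2) →ₗ[ℝ] H1 × H2) (e.symm ((x : H1), T x)) =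
              ((x : H1), T x) := e.apply_symm_apply _
          rw [Submodule.mem_comap, this]
          exact T.mem_graph x
        have h1 := (Submodule.mem_orthogonal G v).mp hv _ hxG
        rw [WithLp.prod_inner_apply] at h1
        have e1 : (e.symm ((x : H1), T x)).fst = (x : H1) := rfl
        have e2 : (e.symm ((x : H1), T x)).snd = (T x : H2) := rfl
        change ⟪(x : H1), v.fst⟫ + ⟪(T x : H2), v.snd⟫ = 0 at h1
        exact h1
      have hbadj : ∀ x : T.domain, ⟪(-v.fst : H1), (x : H1)⟫ = ⟪v.snd, T x⟫ := by
        intro x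
        have h1 := h0 x
        rw [inner_neg_left, real_inner_comm]
        linarith [real_inner_comm v.snd ((T x : H2))]
      have hbdom : v.snd ∈ T.adjoint.domain :=
        LinearPMap.mem_adjoint_domain_of_exists _ ⟨-v.fst, hbadj⟩
      have hbval : T.adjoint ⟨v.snd, hbdom⟩ = -v.fst :=
        LinearPMap.adjoint_apply_eq hTdense _ hbadj
      have h2 := hukey ⟨v.snd, hbdom⟩
      rw [hbval, inner_neg_right] at h2
      rw [WithLp.prod_inner_apply]
      have e1 : (e.symm (u, f)).fst = u := rfl
      have e2 : (e.symm (u, f)).snd = f := rfl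
      change ⟪v.fst, u⟫ + ⟪v.snd, f⟫ = 0
      have c1 : ⟪v.fst, u⟫ = ⟪u, v.fst⟫ := real_inner_comm _ _
      have c2 : ⟪v.snd, f⟫ = ⟪f, v.snd⟫ := real_inner_comm _ _
      linarith
    have huf : (u, f) ∈ T.graph := by
      rw [Submodule.mem_comap] at hz
      have : (e.toLinearEquiv : WithLp 2 (H1 × H2) →ₗ[ℝ] H1 × H2) (e.symm (u, f)) = (u, f) :=
        e.apply_symm_apply _
      rwa [this] at hz
    rcases T.mem_graph_iff.mp huf with ⟨y, hy1, hy2⟩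
    have hy1' : (y : H1) = u := hy1
    have hy2' : T y = f := hy2
    exact ⟨y, hy2', by rw [hy1']; exact hunorm⟩
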